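/- Let λ ∈ ℝ with 0 < λ < 1, δ ≠ 0, and ν = 0. Then for every n ≥ 1, the matrix Π · Df_n has 1 as an eigenvalue (with Π and Df_n as in the Arnold-model setup), hence is not hyperbolic. -/

import Mathlib

open Matrix Polynomial

lemma root_one_aux (lam δ : ℝ) (n : ℕ) :
    (!![1,0,0,0; 0,1,0,0; δ,0,1,0; 0,0,0,1] *
      !![1,0,(n:ℝ)*0,0; 0,lam^n,0,0; 0,0,1,0; 0,0,0,(lam^n)⁻¹] : Matrix (Fin 4) (Fin 4) ℝ).charpoly.IsRoot 1 := by
  set M : Matrix (Fin 4) (Fin 4) ℝ := !![1,0,0,0; 0,1,0,0; δ,0,1,0; 0,0,0,1] *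
      !![1,0,(n:ℝ)*0,0; 0,lam^n,0,0; 0,0,1,0; 0,0,0,(lam^n)⁻¹] with hM
  rw [Polynomial.IsRoot, Matrix.charpoly, ← Polynomial.coe_evalRingHom, RingHom.map_det]
  have hM' : (charmatrix M).map (Polynomial.evalRingHom 1) = (1 : Matrix (Fin 4) (Fin 4) ℝ) - M := by
    ext i j
    simp [charmatrix_apply, Matrix.diagonal_apply, Matrix.one_apply,
      apply_ite (Polynomial.eval (1:ℝ))]
  rw [show (Polynomial.evalRingHom (1:ℝ)).mapMatrix M.charmatrix =
      (M.charmatrix).map (Polynomial.evalRingHom 1) from rfl, hM', hM]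
  refine Matrix.det_eq_zero_of_row_eq_zero 0 (fun j => ?_)
  fin_cases j <;> simp [Fin.sum_univ_succ, Matrix.mul_apply, Matrix.one_apply]

theorem stmt_3 (lam ν δ : ℝ) (hlam : 0 < lam ∧ lam < 1) (hδ : δ ≠ 0) (hν : ν = 0) :
    ∀ n : ℕ, 1 ≤ n →
      ∀ Pi Df : Matrix (Fin 4) (Fin 4) ℝ,
        Pi = !![1,0,0,0; 0,1,0,0; δ,0,1,0; 0,0,0,1] →
        Df = !![1,0,(n:ℝ)*ν,0; 0,lam^n,0,0; 0,0,1,0; 0,0,0,(lam^n)⁻¹] →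
        (Pi * Df).charpoly.IsRoot 1 ∧
          ¬ (∀ z : ℂ, ((Pi * Df).charpoly.map (algebraMap ℝ ℂ)).IsRoot z →
              ‖z‖ ≠ 1) := by
  intro n hn Pi Df hPi hDf
  subst hPi hDf hν
  have h1 := root_one_aux lam δ n
  refine ⟨h1, fun h => ?_⟩
  have h2 := h1.map (f := algebraMap ℝ ℂ)
  rw [_root_.map_one] at h2
  exact h 1 h2 (by simp)
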